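/- Let r ≥ 2 be an integer and let β_1, β_2 be integers with 2 ≤ β_1 < β_2. Suppose U, V, W ∈ ℂ[X] are polynomials such that U + V·ω_{r,β_1} + W·ω_{r,β_2} = 0 in ℂ[[X]]. Then U = V = W = 0. -/

import Mathlib

/-- The generalized binomial coefficient `C(q, k) = q(q−1)⋯(q−k+1)/k!`. -/
def genBinom (q : ℚ) (k : ℕ) : ℚ :=
  (∏ i ∈ Finset.range k, (q - i)) / (k.factorial : ℚ)

/-- The formal power series `ω_{r,β} ∈ ℚ[[X]]`, the Taylor expansion at `0` of
`∏_{j=1}^{β−1} (1−jx)^(−1/r)`. -/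
noncomputable def omegaPS (r β : ℕ) : PowerSeries ℚ :=
  ∏ j ∈ Finset.Icc 1 (β - 1),
    PowerSeries.mk (fun k => (-1) ^ k * genBinom (-1 / r) k * (j : ℚ) ^ k)

/-- `ω_{r,β}` viewed in `ℂ[[X]]` via `ℚ ⊂ ℂ`. -/
noncomputable def omegaPSC (r β : ℕ) : PowerSeries ℂ :=
  PowerSeries.map (Rat.castHom ℂ) (omegaPS r β)

open PowerSeries Polynomial Finset



lemma genBinom_zero (q : ℚ) : genBinom q 0 = 1 := by simp [genBinom]

lemma genBinom_succ (q : ℚ) (n : ℕ) :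
    genBinom q (n + 1) * (n + 1) = genBinom q n * (q - n) := by
  have h1 : ((n + 1).factorial : ℚ) = (n + 1) * n.factorial := by
    push_cast [Nat.factorial_succ]; ring
  have h2 : (n.factorial : ℚ) ≠ 0 := Nat.cast_ne_zero.2 n.factorial_ne_zero
  have h3 : ((n : ℚ) + 1) ≠ 0 := by positivity
  simp only [genBinom, Finset.prod_range_succ, h1]
  field_simp

noncomputable def Ffac (r j : ℕ) : PowerSeries ℂ :=
  PowerSeries.mk (fun k => (((-1) ^ k * genBinom (-1 / r) k * (j : ℚ) ^ k : ℚ) : ℂ))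

lemma constantCoeff_Ffac (r j : ℕ) : constantCoeff (Ffac r j) = 1 := by
  simp [Ffac, ← coeff_zero_eq_constantCoeff, coeff_mk, genBinom_zero]

lemma Ffac_ode (r : ℕ) (hr : r ≠ 0) (j : ℕ) :
    (1 - PowerSeries.C (j : ℂ) * PowerSeries.X) * (d⁄dX ℂ) (Ffac r j)
      = PowerSeries.C ((j : ℂ) / r) * Ffac r j := by
  have hrQ : (r : ℚ) ≠ 0 := Nat.cast_ne_zero.2 hr
  have key : ∀ n : ℕ,
      ((-1 : ℚ) ^ (n+1) * genBinom (-1 / r) (n+1) * (j : ℚ) ^ (n+1)) * (n + 1)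
        = ((j : ℚ) * n + (j : ℚ) / r) * ((-1 : ℚ) ^ n * genBinom (-1 / r) n * (j : ℚ) ^ n) := by
    intro n
    have e : genBinom (-1 / r) (n+1) * (n+1) = genBinom (-1 / r) n * (-1/r - n) :=
      genBinom_succ (-1 / r) n
    calc ((-1 : ℚ) ^ (n+1) * genBinom (-1 / r) (n+1) * (j : ℚ) ^ (n+1)) * (n + 1)
        = ((-1 : ℚ) ^ (n+1) * (j : ℚ) ^ (n+1)) * (genBinom (-1 / r) (n+1) * (n+1)) := by ring
      _ = ((-1 : ℚ) ^ (n+1) * (j : ℚ) ^ (n+1)) * (genBinom (-1 / r) n * (-1/r - n)) := by rw [e]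
      _ = ((j : ℚ) * n + (j : ℚ) / r) * ((-1 : ℚ) ^ n * genBinom (-1 / r) n * (j : ℚ) ^ n) := by
          field_simp; ring
  ext n
  rw [sub_mul, one_mul, map_sub, mul_assoc, PowerSeries.coeff_C_mul, PowerSeries.coeff_C_mul,
    PowerSeries.coeff_derivative]
  cases n with
  | zero =>
    rw [PowerSeries.coeff_zero_X_mul]
    have h0 := congrArg (Rat.cast (K := ℂ)) (key 0)
    push_cast at h0
    simp only [Ffac, coeff_mk]
    push_cast
    linear_combination h0
  | succ m =>
    rw [PowerSeries.coeff_succ_X_mul, PowerSeries.coeff_derivative]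
    have h1 := congrArg (Rat.cast (K := ℂ)) (key (m + 1))
    push_cast at h1
    simp only [Ffac, coeff_mk]
    push_cast
    linear_combination h1

noncomputable def GOm (r : ℕ) (S : Finset ℕ) : PowerSeries ℂ := ∏ j ∈ S, Ffac r j

noncomputable def APoly (S : Finset ℕ) : Polynomial ℂ :=
  ∏ j ∈ S, (1 - Polynomial.C (j : ℂ) * Polynomial.X)

lemma lin_ne_zero (j : ℕ) : (1 - Polynomial.C (j : ℂ) * Polynomial.X) ≠ 0 := by
  intro h
  have := congrArg (fun p => Polynomial.coeff p 0) h
  simp at this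

lemma APoly_ne_zero (S : Finset ℕ) : APoly S ≠ 0 :=
  Finset.prod_ne_zero_iff.2 fun j _ => lin_ne_zero j

lemma coe_APoly (S : Finset ℕ) : ((APoly S : Polynomial ℂ) : PowerSeries ℂ)
    = ∏ j ∈ S, (1 - PowerSeries.C (j : ℂ) * PowerSeries.X) := by
  rw [APoly, ← Polynomial.coeToPowerSeries.ringHom_apply, map_prod]
  refine Finset.prod_congr rfl fun j _ => ?_
  simp only [Polynomial.coeToPowerSeries.ringHom_apply, Polynomial.coe_sub, Polynomial.coe_mul,
    Polynomial.coe_C, Polynomial.coe_X, Polynomial.coe_one]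

lemma constantCoeff_GOm (r : ℕ) (S : Finset ℕ) : constantCoeff (GOm r S) = 1 := by
  rw [GOm, map_prod]
  exact Finset.prod_eq_one fun j _ => constantCoeff_Ffac r j

lemma GOm_isUnit (r : ℕ) (S : Finset ℕ) : IsUnit (GOm r S) := by
  rw [PowerSeries.isUnit_iff_constantCoeff, constantCoeff_GOm]
  exact isUnit_one

lemma GOm_ne_zero (r : ℕ) (S : Finset ℕ) : GOm r S ≠ 0 := by
  intro h
  have := constantCoeff_GOm r S
  rw [h] at this
  simp at this

/-- kernel of derivative -/
lemma eq_C_of_derivative_eq_zero {f : PowerSeries ℂ} (h : (d⁄dX ℂ) f = 0) :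
    f = PowerSeries.C (constantCoeff f) := by
  ext n
  cases n with
  | zero => simp [coeff_zero_eq_constantCoeff]
  | succ m =>
    have := congrArg (PowerSeries.coeff m) h
    rw [PowerSeries.coeff_derivative] at this
    simp only [map_zero] at this
    have h2 : PowerSeries.coeff (m+1) f = 0 := by
      rcases mul_eq_zero.mp this with h' | h'
      · exact h'
      · exact absurd h' (Nat.cast_add_one_ne_zero m)
    rw [h2, PowerSeries.coeff_C]
    simp

lemma Ffac_pow (r : ℕ) (hr : r ≠ 0) (j : ℕ) :
    (Ffac r j) ^ r * (1 - PowerSeries.C (j : ℂ) * PowerSeries.X) = 1 := by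
  have hrC : (r : ℂ) ≠ 0 := Nat.cast_ne_zero.2 hr
  set F := Ffac r j with hF
  set L : PowerSeries ℂ := 1 - PowerSeries.C (j : ℂ) * PowerSeries.X with hL
  have hDL : (d⁄dX ℂ) L = - PowerSeries.C (j : ℂ) := by
    rw [hL, show (1 : ℂ⟦X⟧) - PowerSeries.C (j : ℂ) * PowerSeries.X
        = 1 + (-1 : ℂ⟦X⟧) * (PowerSeries.C (j : ℂ) * PowerSeries.X) from by ring,
      Derivation.map_add, Derivation.map_one_eq_zero]
    rw [Derivation.leibniz, Derivation.leibniz, PowerSeries.derivative_X,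
      PowerSeries.derivative_C]
    simp [smul_eq_mul]
  have hCr : (r : ℂ⟦X⟧) * PowerSeries.C ((j:ℂ)/r) = PowerSeries.C (j:ℂ) := by
    rw [← map_natCast (PowerSeries.C) r, ← map_mul]
    congr 1
    field_simp
  have hD : (d⁄dX ℂ) (F ^ r * L) = 0 := by
    rw [Derivation.leibniz, Derivation.leibniz_pow, hDL]
    simp only [smul_eq_mul, nsmul_eq_mul]
    have ode := Ffac_ode r hr j
    rw [← hF, ← hL] at ode
    have hr1 : r - 1 + 1 = r := Nat.succ_pred_eq_of_pos (Nat.pos_of_ne_zero hr)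
    have expand : F ^ r = F ^ (r-1) * F := by rw [← pow_succ, hr1]
    rw [expand]
    linear_combination (r : ℂ⟦X⟧) * F^(r-1) * ode + F^(r-1) * F * hCr
  have heq := eq_C_of_derivative_eq_zero hD
  rw [heq]
  have hc : constantCoeff (F ^ r * L) = 1 := by
    rw [map_mul, map_pow, hF, constantCoeff_Ffac]
    simp [hL]
  rw [hc, map_one]

lemma GOm_pow (r : ℕ) (hr : r ≠ 0) (S : Finset ℕ) :
    (GOm r S) ^ r * ((APoly S : Polynomial ℂ) : PowerSeries ℂ) = 1 := by
  rw [coe_APoly, GOm, ← Finset.prod_pow, ← Finset.prod_mul_distrib]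
  exact Finset.prod_eq_one fun j _ => Ffac_pow r hr j

lemma exists_B (r : ℕ) (hr : r ≠ 0) (S : Finset ℕ) :
    ∃ B : Polynomial ℂ, ((APoly S : Polynomial ℂ) : PowerSeries ℂ) * (d⁄dX ℂ) (GOm r S)
      = (B : PowerSeries ℂ) * GOm r S := by
  classical
  induction S using Finset.induction_on with
  | empty => exact ⟨0, by simp [APoly, GOm]⟩
  | @insert j S hj ih =>
    obtain ⟨B, hB⟩ := ih
    refine ⟨Polynomial.C ((j:ℂ)/r) * APoly S + (1 - Polynomial.C (j:ℂ) * Polynomial.X) * B, ?_⟩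
    have hA : APoly (insert j S) = (1 - Polynomial.C (j:ℂ) * Polynomial.X) * APoly S :=
      Finset.prod_insert hj
    have hG : GOm r (insert j S) = Ffac r j * GOm r S := Finset.prod_insert hj
    rw [hA, hG, Derivation.leibniz]
    push_cast [Polynomial.coe_add, Polynomial.coe_mul, Polynomial.coe_sub, Polynomial.coe_C,
      Polynomial.coe_X, Polynomial.coe_one]
    simp only [smul_eq_mul]
    have ode := Ffac_ode r hr j
    linear_combination (1 - PowerSeries.C (j:ℂ) * PowerSeries.X) * Ffac r j * hB
      + GOm r S * ((APoly S : Polynomial ℂ) : PowerSeries ℂ) * ode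

lemma count_roots_lin (j₀ j : ℕ) (hj : 1 ≤ j) (hj₀ : 1 ≤ j₀) :
    Multiset.count ((j₀ : ℂ)⁻¹) (1 - Polynomial.C (j : ℂ) * Polynomial.X).roots
      = if j = j₀ then 1 else 0 := by
  classical
  have hjC : (j : ℂ) ≠ 0 := Nat.cast_ne_zero.2 (by omega)
  have hj₀C : (j₀ : ℂ) ≠ 0 := Nat.cast_ne_zero.2 (by omega)
  have hfac : (1 - Polynomial.C (j : ℂ) * Polynomial.X)
      = Polynomial.C (-(j:ℂ)) * (Polynomial.X - Polynomial.C ((j:ℂ)⁻¹)) := by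
    rw [mul_sub, ← Polynomial.C_mul]
    field_simp
    simp only [map_neg, map_one]; ring
  rw [hfac, Polynomial.roots_C_mul _ (neg_ne_zero.2 hjC), Polynomial.roots_X_sub_C,
    Multiset.count_singleton]
  by_cases h : j = j₀
  · subst h; simp
  · have hne : ((j₀:ℂ)⁻¹) ≠ ((j:ℂ)⁻¹) := fun he =>
      h ((Nat.cast_injective (inv_injective he)).symm)
    simp only [Multiset.count_singleton, if_neg hne, if_neg h]

lemma count_roots_APoly (S : Finset ℕ) (hS : ∀ j ∈ S, 1 ≤ j) (j₀ : ℕ) (hj₀ : j₀ ∈ S) :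
    Multiset.count ((j₀ : ℂ)⁻¹) (APoly S).roots = 1 := by
  classical
  rw [APoly, Polynomial.roots_prod _ _ (by rw [← APoly]; exact APoly_ne_zero S),
    Multiset.count_bind]
  have : ∀ j ∈ S, Multiset.count ((j₀ : ℂ)⁻¹) (1 - Polynomial.C (j : ℂ) * Polynomial.X).roots
      = if j = j₀ then 1 else 0 := fun j hj => count_roots_lin j₀ j (hS j hj) (hS j₀ hj₀)
  rw [← Finset.sum_eq_multiset_sum]
  rw [Finset.sum_congr rfl this, Finset.sum_ite_eq' S j₀ (fun _ => 1), if_pos hj₀]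

lemma indep (r : ℕ) (hr : 2 ≤ r) (S : Finset ℕ) (hS : ∀ j ∈ S, 1 ≤ j) (hne : S.Nonempty)
    (P Q : Polynomial ℂ) (h : (P : PowerSeries ℂ) + (Q : PowerSeries ℂ) * GOm r S = 0) :
    P = 0 ∧ Q = 0 := by
  classical
  have hr0 : r ≠ 0 := by omega
  by_cases hQ : Q = 0
  · subst hQ
    simp only [Polynomial.coe_zero, zero_mul, add_zero] at h
    exact ⟨(Polynomial.coe_eq_zero_iff).1 h, rfl⟩
  · exfalso
    have hP : P ≠ 0 := by
      intro hP0
      subst hP0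
      simp only [Polynomial.coe_zero, zero_add] at h
      rcases mul_eq_zero.1 h with h' | h'
      · exact hQ ((Polynomial.coe_eq_zero_iff).1 h')
      · exact GOm_ne_zero r S h'
    -- Q^r = (-P)^r * APoly S as polynomials
    have key : (Q : Polynomial ℂ) ^ r = (-P) ^ r * APoly S := by
      have h1 : (Q : PowerSeries ℂ) * GOm r S = ((-P : Polynomial ℂ) : PowerSeries ℂ) := by
        push_cast [Polynomial.coe_neg]
        linear_combination h
      have h2 : ((Q : PowerSeries ℂ)) ^ r * ((GOm r S) ^ r * ((APoly S : Polynomial ℂ) : PowerSeries ℂ))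
          = ((-P : Polynomial ℂ) : PowerSeries ℂ) ^ r * ((APoly S : Polynomial ℂ) : PowerSeries ℂ) := by
        rw [show (Q : PowerSeries ℂ) ^ r * ((GOm r S) ^ r * ((APoly S : Polynomial ℂ) : PowerSeries ℂ))
            = ((Q : PowerSeries ℂ) * GOm r S) ^ r * ((APoly S : Polynomial ℂ) : PowerSeries ℂ) from by ring,
          h1]
      rw [GOm_pow r hr0 S, mul_one] at h2
      rw [← Polynomial.coe_inj]
      push_cast [Polynomial.coe_pow, Polynomial.coe_mul, Polynomial.coe_neg] at h2 ⊢
      exact h2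
    obtain ⟨j₀, hj₀⟩ := hne
    have hcount := congrArg (fun p => Multiset.count ((j₀ : ℂ)⁻¹) p.roots) key
    simp only [Polynomial.roots_pow, Polynomial.roots_mul
        (mul_ne_zero (pow_ne_zero r (neg_ne_zero.2 hP)) (APoly_ne_zero S)),
      Multiset.count_nsmul, Multiset.count_add] at hcount
    rw [count_roots_APoly S hS j₀ hj₀, Polynomial.roots_neg] at hcount
    set a := Multiset.count ((j₀ : ℂ)⁻¹) Q.roots with ha
    set b := Multiset.count ((j₀ : ℂ)⁻¹) P.roots with hb
    have h1 : r * a = r * b + 1 := hcount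
    rcases le_or_gt a b with hc | hc
    · have h2 : r * a ≤ r * b := Nat.mul_le_mul_left r hc
      omega
    · have h2 : r * (b + 1) ≤ r * a := Nat.mul_le_mul_left r hc
      have h3 : r * (b + 1) = r * b + r := by ring
      omega

lemma order_spec {f : PowerSeries ℂ} (hf : f ≠ 0) :
    ∃ m : ℕ, PowerSeries.coeff m f ≠ 0 ∧ ∀ i < m, PowerSeries.coeff i f = 0 := by
  have h := PowerSeries.order_eq_top.not.2 hf
  obtain ⟨m, hm⟩ := WithTop.ne_top_iff_exists.1 h
  obtain ⟨h1, h2⟩ := PowerSeries.order_eq_nat.1 hm.symm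
  exact ⟨m, h1, h2⟩

lemma wronskian_orders {f g : PowerSeries ℂ} {m n : ℕ}
    (hfm : PowerSeries.coeff m f ≠ 0) (hfm' : ∀ i < m, PowerSeries.coeff i f = 0)
    (hgn : PowerSeries.coeff n g ≠ 0) (hgn' : ∀ i < n, PowerSeries.coeff i g = 0)
    (h : (d⁄dX ℂ) f * g = f * (d⁄dX ℂ) g) (hmn : m < n) : False := by
  obtain ⟨n', rfl⟩ : ∃ n', n = n' + 1 := ⟨n - 1, by omega⟩
  have hmn' : m ≤ n' := by omega
  have hco := congrArg (PowerSeries.coeff (m + n')) h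
  rw [PowerSeries.coeff_mul, PowerSeries.coeff_mul] at hco
  -- RHS sum
  have cR : ∑ p ∈ antidiagonal (m + n'),
      PowerSeries.coeff p.1 f * PowerSeries.coeff p.2 ((d⁄dX ℂ) g)
      = PowerSeries.coeff m f * (PowerSeries.coeff (n'+1) g * ((n' : ℂ) + 1)) := by
    rw [Finset.sum_eq_single (m, n')]
    · rw [PowerSeries.coeff_derivative]
    · rintro ⟨i, j⟩ hij hne
      rw [Finset.HasAntidiagonal.mem_antidiagonal] at hij
      simp only at hij ⊢
      rcases lt_trichotomy i m with hi | hi | hi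
      · rw [hfm' i hi, zero_mul]
      · exfalso; apply hne; subst hi; simp only [Prod.mk.injEq, true_and]; omega
      · have hj : j + 1 < n' + 1 := by omega
        rw [PowerSeries.coeff_derivative, hgn' (j+1) hj, zero_mul, mul_zero]
    · intro hmem
      exact absurd (Finset.HasAntidiagonal.mem_antidiagonal.2 (by simp)) hmem
  -- LHS sum
  have cL : ∑ p ∈ antidiagonal (m + n'),
      PowerSeries.coeff p.1 ((d⁄dX ℂ) f) * PowerSeries.coeff p.2 g
      = (m : ℂ) * (PowerSeries.coeff m f * PowerSeries.coeff (n'+1) g) := by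
    cases m with
    | zero =>
      rw [Finset.sum_eq_zero, Nat.cast_zero, zero_mul]
      rintro ⟨i, j⟩ hij
      rw [Finset.HasAntidiagonal.mem_antidiagonal] at hij
      simp only at hij ⊢
      have : j < n' + 1 := by omega
      rw [hgn' j this, mul_zero]
    | succ m' =>
      rw [Finset.sum_eq_single (m', n' + 1)]
      · rw [PowerSeries.coeff_derivative]
        push_cast
        ring
      · rintro ⟨i, j⟩ hij hne
        rw [Finset.HasAntidiagonal.mem_antidiagonal] at hij
        simp only at hij ⊢
        rcases lt_trichotomy j (n' + 1) with hj | hj | hj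
        · rw [hgn' j hj, mul_zero]
        · exfalso; apply hne; subst hj; simp only [Prod.mk.injEq, and_true]; omega
        · have hi : i + 1 < m' + 1 := by omega
          rw [PowerSeries.coeff_derivative, hfm' (i+1) hi, zero_mul, zero_mul]
      · intro hmem
        exact absurd (Finset.HasAntidiagonal.mem_antidiagonal.2 (by omega)) hmem
  rw [cL, cR] at hco
  have hprod : PowerSeries.coeff m f * PowerSeries.coeff (n'+1) g ≠ 0 :=
    mul_ne_zero hfm hgn
  have h0 : ((m:ℂ) - ((n':ℂ)+1)) * (PowerSeries.coeff m f * PowerSeries.coeff (n'+1) g)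
      = 0 := by linear_combination hco
  have : (m : ℂ) = (n' : ℂ) + 1 := by
    rcases mul_eq_zero.1 h0 with h' | h'
    · exact sub_eq_zero.1 h'
    · exact absurd h' hprod
  have : m = n' + 1 := by exact_mod_cast this
  omega

lemma wronskian_const {f g : PowerSeries ℂ} (hg : g ≠ 0)
    (h : (d⁄dX ℂ) f * g = f * (d⁄dX ℂ) g) :
    ∃ c : ℂ, f = PowerSeries.C c * g := by
  by_cases hf : f = 0
  · exact ⟨0, by simp [hf]⟩
  · obtain ⟨m, hfm, hfm'⟩ := order_spec hf
    obtain ⟨n, hgn, hgn'⟩ := order_spec hg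
    have hmn : m = n := by
      rcases lt_trichotomy m n with hlt | heq | hgt
      · exact absurd (wronskian_orders hfm hfm' hgn hgn' h hlt) id
      · exact heq
      · exact absurd (wronskian_orders hgn hgn' hfm hfm' (by linear_combination -h) hgt) id
    subst hmn
    set c := PowerSeries.coeff m f / PowerSeries.coeff m g with hc
    refine ⟨c, ?_⟩
    by_contra hne
    have hsub : f - PowerSeries.C c * g ≠ 0 := sub_ne_zero.2 hne
    obtain ⟨k, hk, hk'⟩ := order_spec hsub
    have hDsub : (d⁄dX ℂ) (f - PowerSeries.C c * g) * g
        = (f - PowerSeries.C c * g) * (d⁄dX ℂ) g := by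
      have hDc : (d⁄dX ℂ) (-(PowerSeries.C c) : PowerSeries ℂ) = 0 := by
        rw [map_neg, PowerSeries.derivative_C, neg_zero]
      have hD : (d⁄dX ℂ) (f - PowerSeries.C c * g)
          = (d⁄dX ℂ) f - PowerSeries.C c * (d⁄dX ℂ) g := by
        rw [show f - PowerSeries.C c * g = f + (-(PowerSeries.C c)) * g from by ring,
          Derivation.map_add, Derivation.leibniz, hDc]
        simp only [smul_eq_mul, smul_zero, add_zero]
        ring
      rw [hD]
      linear_combination h
    -- order of (f - c g) : can't be anything
    have hkm : ¬ k < m := fun hlt => wronskian_orders hk hk' hgn hgn' hDsub hlt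
    have hkm2 : ¬ m < k := fun hlt => wronskian_orders hgn hgn' hk hk'
      (by linear_combination -hDsub) hlt
    have hkem : k = m := by omega
    apply hk
    rw [hkem, map_sub, PowerSeries.coeff_C_mul, hc, div_mul_cancel₀ _ hgn, sub_self]

lemma omegaPSC_eq (r β : ℕ) : omegaPSC r β = GOm r (Finset.Icc 1 (β - 1)) := by
  rw [omegaPSC, omegaPS, map_prod]
  refine Finset.prod_congr rfl fun j _ => ?_
  ext k
  simp [PowerSeries.coeff_map, Ffac]

lemma GOm_split (r β₁ β₂ : ℕ) (h1 : 1 ≤ β₁) (h2 : β₁ ≤ β₂) :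
    GOm r (Finset.Icc 1 (β₂ - 1))
      = GOm r (Finset.Icc 1 (β₁ - 1)) * GOm r (Finset.Icc β₁ (β₂ - 1)) := by
  rw [GOm, GOm, GOm, ← Finset.prod_union]
  · congr 1
    ext j
    simp only [Finset.mem_union, Finset.mem_Icc]
    omega
  · rw [Finset.disjoint_left]
    intro j hj hj'
    simp only [Finset.mem_Icc] at hj hj'
    omega

/-- **Linear independence of the ω functions** (Lemma 5.3).
If `U, V, W ∈ ℂ[X]` satisfy `U + V·ω_{r,β₁} + W·ω_{r,β₂} = 0` in `ℂ[[X]]`, then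
`U = V = W = 0`. -/
theorem omega_linear_independence (r : ℕ) (hr : 2 ≤ r)
    (β₁ β₂ : ℕ) (hβ₁ : 2 ≤ β₁) (hβ₁₂ : β₁ < β₂)
    (U V W : Polynomial ℂ)
    (h : (U : PowerSeries ℂ) + (V : PowerSeries ℂ) * omegaPSC r β₁
          + (W : PowerSeries ℂ) * omegaPSC r β₂ = 0) :
    U = 0 ∧ V = 0 ∧ W = 0 := by
  classical
  have hr0 : r ≠ 0 := by omega
  set S₁ := Finset.Icc 1 (β₁ - 1) with hS₁def
  set S₂ := Finset.Icc 1 (β₂ - 1) with hS₂def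
  set T := Finset.Icc β₁ (β₂ - 1) with hTdef
  have hS₁pos : ∀ j ∈ S₁, 1 ≤ j := fun j hj => (Finset.mem_Icc.1 hj).1
  have hS₂pos : ∀ j ∈ S₂, 1 ≤ j := fun j hj => (Finset.mem_Icc.1 hj).1
  have hTpos : ∀ j ∈ T, 1 ≤ j := fun j hj => by
    have := (Finset.mem_Icc.1 hj).1; omega
  have hS₁ne : S₁.Nonempty := ⟨1, Finset.mem_Icc.2 (by omega)⟩
  have hS₂ne : S₂.Nonempty := ⟨1, Finset.mem_Icc.2 (by omega)⟩
  have hTne : T.Nonempty := ⟨β₁, Finset.mem_Icc.2 (by omega)⟩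
  set a := GOm r S₁ with ha
  set b := GOm r S₂ with hb
  rw [omegaPSC_eq, omegaPSC_eq, ← hS₁def, ← hS₂def, ← ha, ← hb] at h
  by_cases hW : W = 0
  · subst hW
    simp only [Polynomial.coe_zero, zero_mul, add_zero] at h
    obtain ⟨hU, hV⟩ := indep r hr S₁ hS₁pos hS₁ne U V h
    exact ⟨hU, hV, rfl⟩
  · exfalso
    by_cases hV : V = 0
    · subst hV
      simp only [Polynomial.coe_zero, zero_mul, add_zero] at h
      obtain ⟨hU, hW'⟩ := indep r hr S₂ hS₂pos hS₂ne U W (by linear_combination h)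
      exact hW hW'
    · obtain ⟨B₁, hB₁⟩ := exists_B r hr0 S₁
      obtain ⟨B₂, hB₂⟩ := exists_B r hr0 S₂
      rw [← ha] at hB₁
      rw [← hb] at hB₂
      set A₁ := APoly S₁ with hA₁
      set A₂ := APoly S₂ with hA₂
      -- differentiate h
      have hD : (d⁄dX ℂ) ((U : PowerSeries ℂ) + (V : PowerSeries ℂ) * a
          + (W : PowerSeries ℂ) * b) = 0 := by rw [h]; exact map_zero _
      rw [Derivation.map_add, Derivation.map_add, Derivation.leibniz, Derivation.leibniz] at hD
      simp only [smul_eq_mul] at hD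
      rw [PowerSeries.derivative_coe, PowerSeries.derivative_coe, PowerSeries.derivative_coe]
        at hD
      -- the two bracket polynomials
      set P : Polynomial ℂ := A₁ * (A₂ * Polynomial.derivative W + B₂ * W) * U
          - W * (A₁ * A₂) * Polynomial.derivative U with hP
      set Q : Polynomial ℂ := A₁ * (A₂ * Polynomial.derivative W + B₂ * W) * V
          - W * A₂ * (A₁ * Polynomial.derivative V + B₁ * V) with hQ
      have key : (P : PowerSeries ℂ) + (Q : PowerSeries ℂ) * a = 0 := by
        push_cast [hP, hQ, Polynomial.coe_mul, Polynomial.coe_add, Polynomial.coe_sub]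
        linear_combination
          ((A₁ : PowerSeries ℂ) * ((A₂ : PowerSeries ℂ) * (Polynomial.derivative W : PowerSeries ℂ)
            + (B₂ : PowerSeries ℂ) * (W : PowerSeries ℂ))) * h
          - (W : PowerSeries ℂ) * (A₁ : PowerSeries ℂ) * (A₂ : PowerSeries ℂ) * hD
          + (W : PowerSeries ℂ) * (A₂ : PowerSeries ℂ) * (V : PowerSeries ℂ) * hB₁
          + (W : PowerSeries ℂ) * (W : PowerSeries ℂ) * (A₁ : PowerSeries ℂ) * hB₂
      obtain ⟨-, hQ0⟩ := indep r hr S₁ hS₁pos hS₁ne P Q key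
      -- Wronskian relation for t = W*b, s = V*a
      have hQps : ((Q : Polynomial ℂ) : PowerSeries ℂ) = 0 := by rw [hQ0]; simp
      have hAA : ((A₁ * A₂ : Polynomial ℂ) : PowerSeries ℂ) ≠ 0 := by
        rw [Ne, Polynomial.coe_eq_zero_iff]
        exact mul_ne_zero (APoly_ne_zero S₁) (APoly_ne_zero S₂)
      have hwr : (d⁄dX ℂ) ((W : PowerSeries ℂ) * b) * ((V : PowerSeries ℂ) * a)
          = ((W : PowerSeries ℂ) * b) * (d⁄dX ℂ) ((V : PowerSeries ℂ) * a) := by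
        have hmain : ((A₁ * A₂ : Polynomial ℂ) : PowerSeries ℂ)
            * ((d⁄dX ℂ) ((W : PowerSeries ℂ) * b) * ((V : PowerSeries ℂ) * a)
              - ((W : PowerSeries ℂ) * b) * (d⁄dX ℂ) ((V : PowerSeries ℂ) * a)) = 0 := by
          rw [Derivation.leibniz, Derivation.leibniz]
          simp only [smul_eq_mul]
          rw [PowerSeries.derivative_coe, PowerSeries.derivative_coe]
          push_cast [hQ, Polynomial.coe_mul, Polynomial.coe_add, Polynomial.coe_sub] at hQps ⊢
          linear_combination ((A₁ : PowerSeries ℂ) * (W : PowerSeries ℂ) * (V : PowerSeries ℂ) * a) * hB₂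
            - ((A₂ : PowerSeries ℂ) * (W : PowerSeries ℂ) * (V : PowerSeries ℂ) * b) * hB₁
            + a * b * hQps
        have := mul_eq_zero.1 hmain
        rcases this with h' | h'
        · exact absurd h' hAA
        · exact sub_eq_zero.1 h'
      have hsne : (V : PowerSeries ℂ) * a ≠ 0 := by
        apply mul_ne_zero
        · rw [Ne, Polynomial.coe_eq_zero_iff]; exact hV
        · exact GOm_ne_zero r S₁
      obtain ⟨c, hc⟩ := wronskian_const hsne hwr
      -- W * b = C c * (V * a), b = a * GOm T
      have hsplit : b = a * GOm r T := by
        rw [hb, ha, hS₂def, hS₁def, hTdef]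
        exact GOm_split r β₁ β₂ (by omega) (by omega)
      have hcancel : (W : PowerSeries ℂ) * GOm r T = PowerSeries.C c * (V : PowerSeries ℂ) := by
        have hane : a ≠ 0 := GOm_ne_zero r S₁
        apply mul_left_cancel₀ hane
        rw [hsplit] at hc
        linear_combination hc
      have hfinal : ((-(Polynomial.C c * V) : Polynomial ℂ) : PowerSeries ℂ)
          + ((W : Polynomial ℂ) : PowerSeries ℂ) * GOm r T = 0 := by
        push_cast [Polynomial.coe_neg, Polynomial.coe_mul, Polynomial.coe_C]
        linear_combination hcancel
      obtain ⟨-, hW0⟩ := indep r hr T hTpos hTne _ _ hfinal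
      exact hW hW0
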